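/- Let k ≥ 2 be an integer, let μ ≥ 0 be a real, and let α, β be reals with 0 ≥ α > β > −k. Then the function φ(s) = μ·s^α + s^β satisfies condition (1.11): for all reals t > s > 0, (s·φ(s)^{1/k} − t·φ(t)^{1/k}) · (φ(s)^{(k−1)/k} − φ(t)^{(k−1)/k}) < 0. -/
import Mathlib


/-- For `k ≥ 2`, `μ ≥ 0` and `0 ≥ α > β > −k`, the function `φ(s) = μ·s^α + s^β`
satisfies condition (1.11). -/
theorem condition_1_11_of_sum_powers (k : ℕ) (hk : 2 ≤ k) (μ α β : ℝ)
    (hμ : 0 ≤ μ) (hα : α ≤ 0) (hβα : β < α) (hβ : -(k : ℝ) < β)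
    (φ : ℝ → ℝ) (hφ : ∀ s : ℝ, φ s = μ * s ^ α + s ^ β) :
    ∀ s t : ℝ, 0 < s → s < t →
      (s * φ s ^ (1 / (k : ℝ)) - t * φ t ^ (1 / (k : ℝ))) *
        (φ s ^ (((k : ℝ) - 1) / (k : ℝ)) - φ t ^ (((k : ℝ) - 1) / (k : ℝ))) < 0 := by
  intro s t hs hst
  have ht : 0 < t := hs.trans hst
  have hk0 : (0:ℝ) < k := by exact_mod_cast (by omega : 0 < k)
  have hk1 : (1:ℝ) < k := by exact_mod_cast (by omega : 1 < k)
  have hβ0 : β < 0 := hβα.trans_le hα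
  have hφs : 0 < φ s := by rw [hφ]; positivity
  have hφt : 0 < φ t := by rw [hφ]; positivity
  have hdec : φ t < φ s := by
    rw [hφ, hφ]
    have h1 : t ^ α ≤ s ^ α := Real.rpow_le_rpow_of_nonpos hs hst.le hα
    have h2 : t ^ β < s ^ β := Real.rpow_lt_rpow_of_neg hs hst hβ0
    nlinarith [mul_le_mul_of_nonneg_left h1 hμ]
  have hinc : s ^ (k:ℝ) * φ s < t ^ (k:ℝ) * φ t := by
    rw [hφ, hφ]
    have e1 : ∀ x : ℝ, 0 < x → x ^ (k:ℝ) * (μ * x ^ α + x ^ β)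
        = μ * x ^ ((k:ℝ) + α) + x ^ ((k:ℝ) + β) := by
      intro x hx
      rw [Real.rpow_add hx, Real.rpow_add hx]; ring
    rw [e1 s hs, e1 t ht]
    have h1 : s ^ ((k:ℝ)+α) ≤ t ^ ((k:ℝ)+α) :=
      Real.rpow_le_rpow hs.le hst.le (by linarith)
    have h2 : s ^ ((k:ℝ)+β) < t ^ ((k:ℝ)+β) :=
      Real.rpow_lt_rpow hs.le hst (by linarith)
    nlinarith [mul_le_mul_of_nonneg_left h1 hμ]
  have first : s * φ s ^ (1/(k:ℝ)) < t * φ t ^ (1/(k:ℝ)) := by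
    have h := Real.rpow_lt_rpow (by positivity) hinc
      (by positivity : 0 < 1/(k:ℝ))
    have es : (s ^ (k:ℝ)) ^ (1/(k:ℝ)) = s := by
      rw [← Real.rpow_mul hs.le, mul_one_div_cancel hk0.ne', Real.rpow_one]
    have et : (t ^ (k:ℝ)) ^ (1/(k:ℝ)) = t := by
      rw [← Real.rpow_mul ht.le, mul_one_div_cancel hk0.ne', Real.rpow_one]
    rwa [Real.mul_rpow (by positivity) hφs.le,
      Real.mul_rpow (by positivity) hφt.le, es, et] at h
  have second : φ t ^ (((k:ℝ)-1)/(k:ℝ)) < φ s ^ (((k:ℝ)-1)/(k:ℝ)) :=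
    Real.rpow_lt_rpow hφt.le hdec (div_pos (by linarith) hk0)
  exact mul_neg_of_neg_of_pos (by linarith) (by linarith)
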